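/- The group of permutations σ of Z/7 that are automorphisms of the Fano plane with blocks { {i,i+1,i+3} : i ∈ Z/7 } and satisfy σ(x) → σ(y) iff x → y, where x → y iff y−x ∈ {1,2,4} (mod 7), is isomorphic to the Frobenius group of order 21. -/
import Mathlib


/-- A Steiner triple system: every block has 3 points and every pair of
distinct points lies in exactly one block. -/
def IsSteiner {V : Type*} [DecidableEq V] (B : Finset (Finset V)) : Prop :=
  (∀ b ∈ B, b.card = 3) ∧
  ∀ x y : V, x ≠ y → ∃! b : Finset V, b ∈ B ∧ x ∈ b ∧ y ∈ b

/-- A Fano plane: a Steiner triple system on a 7-point set. -/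
def IsFano {V : Type*} [DecidableEq V] [Fintype V] (B : Finset (Finset V)) : Prop :=
  Fintype.card V = 7 ∧ IsSteiner B

/-- Two systems on the same point set are disjoint if they share no block. -/
def DisjointSTS {V : Type*} [DecidableEq V] (B1 B2 : Finset (Finset V)) : Prop :=
  ∀ b : Finset V, ¬ (b ∈ B1 ∧ b ∈ B2)

/-- Orthogonality of two Steiner triple systems: disjoint, and two distinct
pairs lying in blocks of the first system with a common third point never have
the same third point in the second system. -/
def OrthogonalSTS {V : Type*} [DecidableEq V] (B1 B2 : Finset (Finset V)) : Prop :=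
  DisjointSTS B1 B2 ∧
  ∀ x y z u v a b : V, ({x, y} : Finset V) ≠ ({u, v} : Finset V) →
    ({x, y, z} : Finset V) ∈ B1 → ({u, v, z} : Finset V) ∈ B1 →
    ({x, y, a} : Finset V) ∈ B2 → ({u, v, b} : Finset V) ∈ B2 → a ≠ b

/-- A permutation is an automorphism of a block set if it maps blocks to blocks. -/
def IsAutomorphism {V : Type*} [DecidableEq V] (B : Finset (Finset V)) (σ : Equiv.Perm V) : Prop :=
  ∀ b : Finset V, b.image σ ∈ B ↔ b ∈ B

/-- The group of all automorphisms of a block set, as a subgroup of the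
permutation group of the points. -/
def autGroup {V : Type*} [DecidableEq V] (B : Finset (Finset V)) : Subgroup (Equiv.Perm V) where
  carrier := {σ | IsAutomorphism B σ}
  one_mem' := by intro b; simp [Finset.image_id]
  mul_mem' := by
    intro σ τ hσ hτ
    intro b
    have h : Finset.image (⇑(σ * τ)) b = Finset.image ⇑σ (Finset.image ⇑τ b) := by
      rw [Finset.image_image]; rfl
    rw [h, hσ (Finset.image ⇑τ b), hτ b]
  inv_mem' := by
    intro σ hσ
    intro b
    have h : Finset.image ⇑σ (Finset.image ⇑σ⁻¹ b) = b := by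
      ext z
      simp
    have h2 := hσ (Finset.image ⇑σ⁻¹ b)
    rw [h] at h2
    exact h2.symm

/-- The group of all permutations preserving a binary relation. -/
def relAutGroup {V : Type*} (r : V → V → Prop) : Subgroup (Equiv.Perm V) where
  carrier := {σ | ∀ x y : V, r (σ x) (σ y) ↔ r x y}
  one_mem' := by intro x y; rfl
  mul_mem' := by
    intro σ τ hσ hτ x y
    exact (hσ (τ x) (τ y)).trans (hτ x y)
  inv_mem' := by
    intro σ hσ x y
    have := hσ (σ⁻¹ x) (σ⁻¹ y)
    simpa using this.symm

/-- The Fano plane on `ZMod 7` with blocks `{i, i+1, i+3}`. -/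
def fanoB1 : Finset (Finset (ZMod 7)) :=
  Finset.univ.image (fun i : ZMod 7 => ({i, i + 1, i + 3} : Finset (ZMod 7)))

/-- The Fano plane on `ZMod 7` with blocks `{i, i+1, i+5}`. -/
def fanoB2 : Finset (Finset (ZMod 7)) :=
  Finset.univ.image (fun i : ZMod 7 => ({i, i + 1, i + 5} : Finset (ZMod 7)))

/-- The permutation `x ↦ 2x` of `ZMod 7`. -/
def lam2 : Equiv.Perm (ZMod 7) :=
  ⟨fun x => 2 * x, fun x => 4 * x, by decide, by decide⟩

/-- The permutation `x ↦ x + 1` of `ZMod 7`. -/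
def tau1 : Equiv.Perm (ZMod 7) :=
  ⟨fun x => x + 1, fun x => x - 1, by decide, by decide⟩

/-- The Frobenius group of order 21, realized as the subgroup of `Perm (ZMod 7)`
generated by `x ↦ 2x` and `x ↦ x + 1`. -/
def F21 : Subgroup (Equiv.Perm (ZMod 7)) := Subgroup.closure {lam2, tau1}

set_option maxRecDepth 40000

private lemma tau1_pow_apply (n : ℕ) : ∀ x : ZMod 7, (tau1 ^ n) x = x + n := by
  induction n with
  | zero => intro x; simp
  | succ k ih =>
      intro x
      rw [pow_succ, Equiv.Perm.mul_apply, ih (tau1 x)]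
      show x + 1 + k = _; push_cast; ring

private lemma tau1_pow_inv_apply (n : ℕ) (y : ZMod 7) : ((tau1 ^ n)⁻¹) y = y - n := by
  rw [Equiv.Perm.inv_def, Equiv.symm_apply_eq, tau1_pow_apply]; ring

private lemma lam2_pow_apply (n : ℕ) : ∀ x : ZMod 7, (lam2 ^ n) x = 2 ^ n * x := by
  induction n with
  | zero => intro x; simp
  | succ k ih =>
      intro x
      rw [pow_succ, Equiv.Perm.mul_apply, ih (lam2 x)]
      show 2 ^ k * (2 * x) = _; ring

private lemma lam2_pow_inv_apply (n : ℕ) (y : ZMod 7) : ((lam2 ^ n)⁻¹) y = 4 ^ n * y := by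
  rw [Equiv.Perm.inv_def, Equiv.symm_apply_eq, lam2_pow_apply]
  have h8 : (2 : ZMod 7) ^ n * (4 ^ n * y) = (8 : ZMod 7) ^ n * y := by
    rw [show (8 : ZMod 7) = 2 * 4 by decide, mul_pow]; ring
  rw [h8, show (8 : ZMod 7) = 1 by decide, one_pow, one_mul]

private abbrev frel (x y : ZMod 7) : Prop := y - x = 1 ∨ y - x = 2 ∨ y - x = 4

private lemma mem3 {a c : ZMod 7} (h : a - c = 1 ∨ a - c = 2 ∨ a - c = 4) :
    a = 1 + c ∨ a = 2 + c ∨ a = 4 + c := by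
  rcases h with h | h | h
  · exact Or.inl (eq_add_of_sub_eq h)
  · exact Or.inr (Or.inl (eq_add_of_sub_eq h))
  · exact Or.inr (Or.inr (eq_add_of_sub_eq h))

private lemma fix_eq_one (σ : Equiv.Perm (ZMod 7))
    (hR : ∀ x y : ZMod 7, frel (σ x) (σ y) ↔ frel x y)
    (h0 : σ 0 = 0) (h1 : σ 1 = 1) : σ = 1 := by
  have key : ∀ x y : ZMod 7, frel x y → frel (σ x) (σ y) := fun x y h => (hR x y).2 h
  have c2a := key 0 2 (by decide); rw [h0] at c2a
  have c2b := key 1 2 (by decide); rw [h1] at c2b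
  have h2 : σ 2 = 2 := by
    rcases mem3 c2a with h | h | h <;> rcases mem3 c2b with h' | h' | h' <;>
      rw [h] at h' ⊢ <;> revert h' <;> decide
  have c3a := key 1 3 (by decide); rw [h1] at c3a
  have c3b := key 2 3 (by decide); rw [h2] at c3b
  have h3 : σ 3 = 3 := by
    rcases mem3 c3a with h | h | h <;> rcases mem3 c3b with h' | h' | h' <;>
      rw [h] at h' ⊢ <;> revert h' <;> decide
  have c4a := key 0 4 (by decide); rw [h0] at c4a
  have c4b := key 3 4 (by decide); rw [h3] at c4b
  have h4 : σ 4 = 4 := by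
    rcases mem3 c4a with h | h | h <;> rcases mem3 c4b with h' | h' | h' <;>
      rw [h] at h' ⊢ <;> revert h' <;> decide
  have c5a := key 1 5 (by decide); rw [h1] at c5a
  have c5b := key 4 5 (by decide); rw [h4] at c5b
  have h5 : σ 5 = 5 := by
    rcases mem3 c5a with h | h | h <;> rcases mem3 c5b with h' | h' | h' <;>
      rw [h] at h' ⊢ <;> revert h' <;> decide
  have c6a := key 4 6 (by decide); rw [h4] at c6a
  have c6b := key 5 6 (by decide); rw [h5] at c6b
  have h6 : σ 6 = 6 := by
    rcases mem3 c6a with h | h | h <;> rcases mem3 c6b with h' | h' | h' <;>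
      rw [h] at h' ⊢ <;> revert h' <;> decide
  ext x
  have hx := (by decide :
    ∀ x : ZMod 7, x = 0 ∨ x = 1 ∨ x = 2 ∨ x = 3 ∨ x = 4 ∨ x = 5 ∨ x = 6) x
  rcases hx with rfl | rfl | rfl | rfl | rfl | rfl | rfl <;>
    simp [h0, h1, h2, h3, h4, h5, h6]

private lemma rel_to_F21 (σ : Equiv.Perm (ZMod 7))
    (hσ : σ ∈ relAutGroup frel) : σ ∈ F21 := by
  have hlam : lam2 ∈ F21 := Subgroup.subset_closure (by simp)
  have htau : tau1 ∈ F21 := Subgroup.subset_closure (by simp)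
  have htR : tau1 ∈ relAutGroup frel := by
    show ∀ x y : ZMod 7, _; decide
  have hlR : lam2 ∈ relAutGroup frel := by
    show ∀ x y : ZMod 7, _; decide
  -- normalize so that 0 is fixed
  set j : ℕ := (σ 0).val with hj
  set τ : Equiv.Perm (ZMod 7) := (tau1 ^ j)⁻¹ * σ with hτ
  have hτR : τ ∈ relAutGroup frel := mul_mem (inv_mem (pow_mem htR j)) hσ
  have hτ0 : τ 0 = 0 := by
    show ((tau1 ^ j)⁻¹) (σ 0) = 0
    rw [tau1_pow_inv_apply, hj, ZMod.natCast_val, ZMod.cast_id, sub_self]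
  -- τ 1 ∈ {1,2,4}
  have h1 : frel (τ 0) (τ 1) := (hτR 0 1).2 (by decide)
  rw [hτ0] at h1
  have h1' : τ 1 = 1 ∨ τ 1 = 2 ∨ τ 1 = 4 := by
    rcases mem3 h1 with h | h | h <;> rw [h] <;> simp
  have main : ∀ i : ℕ, τ 1 = (2 : ZMod 7) ^ i → σ ∈ F21 := by
    intro i hi
    set ρ : Equiv.Perm (ZMod 7) := (lam2 ^ i)⁻¹ * τ with hρ
    have hρR : ρ ∈ relAutGroup frel := mul_mem (inv_mem (pow_mem hlR i)) hτR
    have hlinv := lam2_pow_inv_apply i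
    have hρ0 : ρ 0 = 0 := by
      show ((lam2 ^ i)⁻¹) (τ 0) = 0
      rw [hτ0, hlinv, mul_zero]
    have hρ1 : ρ 1 = 1 := by
      show ((lam2 ^ i)⁻¹) (τ 1) = 1
      rw [hi, hlinv]
      rw [show (4 : ZMod 7) ^ i * 2 ^ i = (8 : ZMod 7) ^ i by
        rw [show (8 : ZMod 7) = 4 * 2 by decide, mul_pow],
        show (8 : ZMod 7) = 1 by decide, one_pow]
    have hρ1' : ρ = 1 := fix_eq_one ρ hρR hρ0 hρ1
    have hσeq : σ = tau1 ^ j * (lam2 ^ i * ρ) := by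
      rw [hρ, hτ, mul_inv_cancel_left, mul_inv_cancel_left]
    rw [hσeq, hρ1', mul_one]
    exact mul_mem (pow_mem htau j) (pow_mem hlam i)
  rcases h1' with h | h | h
  · exact main 0 (by rwa [pow_zero])
  · exact main 1 (by rwa [pow_one])
  · exact main 2 (by rw [h]; decide)

theorem orientedFano_autGroup_iso_F21 :
    Nonempty ((autGroup fanoB1 ⊓
      relAutGroup (fun x y : ZMod 7 => y - x = 1 ∨ y - x = 2 ∨ y - x = 4) :
        Subgroup (Equiv.Perm (ZMod 7))) ≃* F21) := by
  have heq : (autGroup fanoB1 ⊓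
      relAutGroup (fun x y : ZMod 7 => y - x = 1 ∨ y - x = 2 ∨ y - x = 4) :
        Subgroup (Equiv.Perm (ZMod 7))) = F21 := by
    apply le_antisymm
    · intro σ hσ
      exact rel_to_F21 σ hσ.2
    · rw [F21, Subgroup.closure_le]
      rintro x hx
      simp only [Set.mem_insert_iff, Set.mem_singleton_iff] at hx
      rcases hx with rfl | rfl
      · exact ⟨(by decide : ∀ b : Finset (ZMod 7), b.image lam2 ∈ fanoB1 ↔ b ∈ fanoB1),
          by show ∀ x y : ZMod 7, _; decide⟩
      · exact ⟨(by decide : ∀ b : Finset (ZMod 7), b.image tau1 ∈ fanoB1 ↔ b ∈ fanoB1),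
          by show ∀ x y : ZMod 7, _; decide⟩
  exact ⟨MulEquiv.subgroupCongr heq⟩
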